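/- Let 1 > α > β > 0, α_n = (n+1)^{−α}, β_n = (n+1)^{−β}, let q_1, q_2 > 0, and let z ∈ [0, 1 − (α − β)]. Define K_α(z) = max{⌈(q_1/(2(α−β+z)))^{1/α}⌉, ⌈(4(α−β+z)/q_1)^{1/(1−α)}⌉} and K_β(z) = max{⌈(q_2/(α−β+z))^{1/β}⌉, ⌈(4(α−β+z)/q_2)^{1/(1−β)}⌉}. Then: (1) for all n ≥ K_α(z), (n+1)^{−z}/(n+2)^{−z} ≤ (α_{n+1}/α_n)(β_n/β_{n+1}) e^{(q_1/2) α_{n+1}}; and (2) for all n ≥ K_β(z), (n+1)^{−z}/(n+2)^{−z} ≤ (α_{n+1}/α_n)(β_n/β_{n+1}) e^{(q_2/2) β_{n+2}}. -/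

import Mathlib

noncomputable section

/-- Stepsizes `(n+1)^{-a}`. -/
def steps (a : ℝ) (n : ℕ) : ℝ := ((n : ℝ) + 1) ^ (-a)

private lemma aux_exp (c q x : ℝ) (hc : 0 ≤ c) (hx : 0 < x)
    (h : c / x ≤ q) : ((x + 1) / x) ^ c ≤ Real.exp q := by
  have hr : 0 < (x + 1) / x := by positivity
  rw [Real.rpow_def_of_pos hr]
  apply Real.exp_le_exp.mpr
  have hlog : Real.log ((x + 1) / x) ≤ (x + 1) / x - 1 :=
    Real.log_le_sub_one_of_pos hr
  have heq : (x + 1) / x - 1 = 1 / x := by field_simp; ring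
  calc Real.log ((x + 1) / x) * c ≤ (1 / x) * c := by
        apply mul_le_mul_of_nonneg_right _ hc
        rw [← heq]; exact hlog
    _ = c / x := by ring
    _ ≤ q := h

private lemma aux_div (c q γ x w : ℝ) (hc : 0 < c) (hq : 0 < q) (hγ0 : 0 < γ) (hγ1 : γ < 1)
    (hx : 0 < x) (hw0 : 0 < w) (hw : w ≤ 2 * x)
    (hxγ : 4 * c / q ≤ x ^ (1 - γ)) :
    c / x ≤ q / 2 * w ^ (-γ) := by
  have hwγ : w ^ γ ≤ 2 * x ^ γ := by
    calc w ^ γ ≤ (2 * x) ^ γ := Real.rpow_le_rpow hw0.le hw hγ0.le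
      _ = 2 ^ γ * x ^ γ := Real.mul_rpow (by norm_num) hx.le
      _ ≤ 2 * x ^ γ := by
          have h2 : (2:ℝ) ^ γ ≤ 2 ^ (1:ℝ) :=
            Real.rpow_le_rpow_of_exponent_le (by norm_num) hγ1.le
          rw [Real.rpow_one] at h2
          exact mul_le_mul_of_nonneg_right h2 (Real.rpow_nonneg hx.le _)
  have hwp : 0 < w ^ γ := Real.rpow_pos_of_pos hw0 _
  rw [Real.rpow_neg hw0.le, ← div_eq_mul_inv, div_le_div_iff₀ hx hwp]
  calc c * w ^ γ ≤ c * (2 * x ^ γ) := mul_le_mul_of_nonneg_left hwγ hc.le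
    _ = 2 * c * x ^ γ := by ring
    _ ≤ (q / 2 * x ^ (1 - γ)) * x ^ γ := by
        apply mul_le_mul_of_nonneg_right _ (Real.rpow_nonneg hx.le _)
        have : 2 * c = q / 2 * (4 * c / q) := by field_simp; ring
        rw [this]
        exact mul_le_mul_of_nonneg_left hxγ (by positivity)
    _ = q / 2 * x := by
        rw [mul_assoc, ← Real.rpow_add hx]
        norm_num

private lemma reduce (α β z E x y : ℝ) (hx : 0 < x) (hy : 0 < y)
    (h : (y / x) ^ (α - β + z) ≤ Real.exp E) :
    x ^ (-z) / y ^ (-z) ≤ (y ^ (-α) / x ^ (-α)) * (x ^ (-β) / y ^ (-β)) * Real.exp E := by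
  have hr : 0 < y / x := by positivity
  have e1 : x ^ (-z) / y ^ (-z) = (y / x) ^ z := by
    rw [Real.rpow_neg hx.le, Real.rpow_neg hy.le, inv_div_inv, ← Real.div_rpow hy.le hx.le]
  have e2 : y ^ (-α) / x ^ (-α) = (y / x) ^ (-α) := (Real.div_rpow hy.le hx.le _).symm
  have e3 : x ^ (-β) / y ^ (-β) = (y / x) ^ β := by
    rw [Real.rpow_neg hx.le, Real.rpow_neg hy.le, inv_div_inv, ← Real.div_rpow hy.le hx.le]
  rw [e1, e2, e3, ← Real.rpow_add hr]
  have e4 : (y / x) ^ z = (y / x) ^ (-α + β) * (y / x) ^ (α - β + z) := by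
    rw [← Real.rpow_add hr]; ring_nf
  rw [e4]
  exact mul_le_mul_of_nonneg_left h (Real.rpow_nonneg hr.le _)

theorem stmt11 (α β q1 q2 z : ℝ)
    (hβ : 0 < β) (hβα : β < α) (hα : α < 1)
    (hq1 : 0 < q1) (hq2 : 0 < q2)
    (hz0 : 0 ≤ z) (hz1 : z ≤ 1 - (α - β))
    (Kα Kβ : ℕ)
    (hKα : Kα = max ⌈(q1 / (2 * (α - β + z))) ^ (1 / α)⌉₊
                    ⌈(4 * (α - β + z) / q1) ^ (1 / (1 - α))⌉₊)
    (hKβ : Kβ = max ⌈(q2 / (α - β + z)) ^ (1 / β)⌉₊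
                    ⌈(4 * (α - β + z) / q2) ^ (1 / (1 - β))⌉₊) :
    (∀ n : ℕ, Kα ≤ n →
      ((n : ℝ) + 1) ^ (-z) / ((n : ℝ) + 2) ^ (-z) ≤
        (steps α (n + 1) / steps α n) * (steps β n / steps β (n + 1)) *
          Real.exp (q1 / 2 * steps α (n + 1))) ∧
    (∀ n : ℕ, Kβ ≤ n →
      ((n : ℝ) + 1) ^ (-z) / ((n : ℝ) + 2) ^ (-z) ≤
        (steps α (n + 1) / steps α n) * (steps β n / steps β (n + 1)) *
          Real.exp (q2 / 2 * steps β (n + 2))) := by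
  have hc : 0 < α - β + z := by linarith
  constructor
  · intro n hn
    -- extract bound from ceiling
    have hceil : (4 * (α - β + z) / q1) ^ (1 / (1 - α)) ≤ (n : ℝ) := by
      have h1 : ⌈(4 * (α - β + z) / q1) ^ (1 / (1 - α))⌉₊ ≤ n := by
        refine le_trans ?_ hn
        rw [hKα]; exact le_max_right _ _
      calc (4 * (α - β + z) / q1) ^ (1 / (1 - α))
          ≤ (⌈(4 * (α - β + z) / q1) ^ (1 / (1 - α))⌉₊ : ℝ) := Nat.le_ceil _
        _ ≤ (n : ℝ) := by exact_mod_cast h1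
    have hxγ : 4 * (α - β + z) / q1 ≤ ((n : ℝ) + 1) ^ (1 - α) := by
      have h0 : (0:ℝ) ≤ 4 * (α - β + z) / q1 := by positivity
      have key : ((4 * (α - β + z) / q1) ^ (1 / (1 - α))) ^ (1 - α) = 4 * (α - β + z) / q1 := by
        rw [← Real.rpow_mul h0, one_div_mul_cancel (by linarith : (1:ℝ) - α ≠ 0),
          Real.rpow_one]
      calc 4 * (α - β + z) / q1
          = ((4 * (α - β + z) / q1) ^ (1 / (1 - α))) ^ (1 - α) := key.symm
        _ ≤ ((n : ℝ) + 1) ^ (1 - α) :=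
            Real.rpow_le_rpow (Real.rpow_nonneg h0 _) (by linarith) (by linarith)
    simp only [steps]
    push_cast
    have h2 : ((n:ℝ) + 2) = (n:ℝ) + 1 + 1 := by ring
    rw [h2]
    refine reduce α β z _ ((n:ℝ) + 1) ((n:ℝ) + 1 + 1) (by positivity) (by positivity) ?_
    refine aux_exp _ _ _ hc.le (by positivity) ?_
    exact aux_div _ _ α _ _ hc hq1 (by linarith) hα (by positivity) (by positivity)
      (by linarith) hxγ
  · intro n hn
    have hn1 : 1 ≤ n := by
      refine le_trans ?_ hn
      rw [hKβ]
      refine le_trans ?_ (le_max_left _ _)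
      exact Nat.one_le_ceil_iff.mpr (Real.rpow_pos_of_pos (by positivity) _)
    have hceil : (4 * (α - β + z) / q2) ^ (1 / (1 - β)) ≤ (n : ℝ) := by
      have h1 : ⌈(4 * (α - β + z) / q2) ^ (1 / (1 - β))⌉₊ ≤ n := by
        refine le_trans ?_ hn
        rw [hKβ]; exact le_max_right _ _
      calc (4 * (α - β + z) / q2) ^ (1 / (1 - β))
          ≤ (⌈(4 * (α - β + z) / q2) ^ (1 / (1 - β))⌉₊ : ℝ) := Nat.le_ceil _
        _ ≤ (n : ℝ) := by exact_mod_cast h1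
    have hxγ : 4 * (α - β + z) / q2 ≤ ((n : ℝ) + 1) ^ (1 - β) := by
      have h0 : (0:ℝ) ≤ 4 * (α - β + z) / q2 := by positivity
      have key : ((4 * (α - β + z) / q2) ^ (1 / (1 - β))) ^ (1 - β) = 4 * (α - β + z) / q2 := by
        rw [← Real.rpow_mul h0, one_div_mul_cancel (by linarith : (1:ℝ) - β ≠ 0),
          Real.rpow_one]
      calc 4 * (α - β + z) / q2
          = ((4 * (α - β + z) / q2) ^ (1 / (1 - β))) ^ (1 - β) := key.symm
        _ ≤ ((n : ℝ) + 1) ^ (1 - β) :=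
            Real.rpow_le_rpow (Real.rpow_nonneg h0 _) (by linarith) (by linarith)
    have hn1' : (1:ℝ) ≤ (n:ℝ) := by exact_mod_cast hn1
    simp only [steps]
    push_cast
    have h2 : ((n:ℝ) + 2) = (n:ℝ) + 1 + 1 := by ring
    rw [h2]
    refine reduce α β z _ ((n:ℝ) + 1) ((n:ℝ) + 1 + 1) (by positivity) (by positivity) ?_
    refine aux_exp _ _ _ hc.le (by positivity) ?_
    exact aux_div _ _ β _ _ hc hq2 hβ (by linarith) (by positivity) (by positivity)
      (by linarith) hxγ
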